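/- If f♯_arc is the composition of the domain-consistency operators of the constraints c₁,…,cₘ, and f_C is the composition of their exact filtering operators, then the solution set of the constraint system, which equals gfp(f_C), is contained in γ_arc(gfp(f♯_arc)). -/

import Mathlib

/-- Coordinatewise projections. -/
def alphaArc {n : ℕ} (S : Set (Fin n → ℤ)) : Fin n → Set ℤ :=
  fun i => (fun s => s i) '' S

/-- Cartesian product of a tuple of domains. -/
def gammaArc {n : ℕ} (A : Fin n → Set ℤ) : Set (Fin n → ℤ) :=
  {s | ∀ i, s i ∈ A i}

/-- Composition `g₁ ∘ ⋯ ∘ gₘ` of a list of operators. -/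
def compList {α : Type*} (fs : List (α → α)) : α → α := fs.foldr (· ∘ ·) id

lemma compList_filter {n m : ℕ} (c : Fin m → (Fin n → ℤ) → Prop)
    (f : Fin m → Set (Fin n → ℤ) → Set (Fin n → ℤ))
    (hf : ∀ i, f i = fun S => {s ∈ S | c i s}) :
    ∀ (L : List (Fin m)) (S : Set (Fin n → ℤ)),
      compList (L.map f) S = {s ∈ S | ∀ i ∈ L, c i s} := by
  intro L
  induction L with
  | nil => intro S; ext s; simp [compList]
  | cons a L ih =>
      intro S
      have : compList ((a :: L).map f) S = f a (compList (L.map f) S) := rfl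
      rw [this, ih, hf]
      ext s; simp; tauto

lemma compList_infl {α : Type*} [Preorder α] (a : α) :
    ∀ (L : List (α → α)), (∀ g ∈ L, a ≤ g a ∧ Monotone g) → a ≤ compList L a := by
  intro L
  induction L with
  | nil => intro _; exact le_refl a
  | cons g L ih =>
      intro h
      have h1 := h g List.mem_cons_self
      have h2 : a ≤ compList L a := ih fun g' hg' => h g' (List.mem_cons_of_mem _ hg')
      calc a ≤ g a := h1.1
        _ ≤ g (compList L a) := h1.2 h2
        _ = compList (g :: L) a := rfl

theorem sol_eq_gfp_subset_gamma_gfp_arc {n m : ℕ} (c : Fin m → (Fin n → ℤ) → Prop)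
    (f : Fin m → Set (Fin n → ℤ) → Set (Fin n → ℤ))
    (hf : ∀ i, f i = fun S => {s ∈ S | c i s})
    (fC : Set (Fin n → ℤ) → Set (Fin n → ℤ))
    (hfC : fC = compList (List.ofFn f))
    (farc : (Fin n → Set ℤ) → (Fin n → Set ℤ))
    (hfarc : farc = compList (List.ofFn fun i => fun A => alphaArc (f i (gammaArc A)))) :
    {s : Fin n → ℤ | ∀ i, c i s} = sSup {S | S ≤ fC S} ∧
    sSup {S | S ≤ fC S} ⊆ gammaArc (sSup {A | A ≤ farc A}) := by
  set sol : Set (Fin n → ℤ) := {s | ∀ i, c i s} with hsol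
  have hfC' : ∀ S, fC S = {s ∈ S | ∀ i, c i s} := by
    intro S
    rw [hfC, List.ofFn_eq_map, compList_filter c f hf]
    ext s; simp [List.mem_finRange]
  have h1 : sol = sSup {S | S ≤ fC S} := by
    apply le_antisymm
    · apply le_sSup
      rw [Set.mem_setOf_eq, hfC']
      intro s hs; exact ⟨hs, hs⟩
    · apply sSup_le
      intro S hS
      rw [Set.mem_setOf_eq, hfC' S] at hS
      intro s hs
      exact (hS hs).2
  refine ⟨h1, ?_⟩
  rw [← h1]
  -- A* = alphaArc sol is a postfixed point of farc
  set A : Fin n → Set ℤ := alphaArc sol with hA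
  have hsolgamma : sol ⊆ gammaArc A := by
    intro s hs i
    exact ⟨s, hs, rfl⟩
  have hstep : ∀ i : Fin m, A ≤ (fun B => alphaArc (f i (gammaArc B))) A ∧
      Monotone (fun B => alphaArc (f i (gammaArc B))) := by
    intro i
    constructor
    · have hsub : sol ⊆ f i (gammaArc A) := by
        rw [hf]
        intro s hs
        exact ⟨hsolgamma hs, hs i⟩
      intro j x hx
      obtain ⟨s, hs, rfl⟩ := hx
      exact ⟨s, hsub hs, rfl⟩
    · intro B B' hBB' j x hx
      obtain ⟨s, hs, rfl⟩ := hx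
      refine ⟨s, ?_, rfl⟩
      rw [hf] at hs ⊢
      exact ⟨fun k => hBB' k (hs.1 k), hs.2⟩
  have hApost : A ≤ farc A := by
    rw [hfarc]
    apply compList_infl
    intro g hg
    rw [List.mem_ofFn] at hg
    obtain ⟨i, rfl⟩ := hg
    exact hstep i
  have hAle : A ≤ sSup {B | B ≤ farc B} := le_sSup hApost
  calc sol ⊆ gammaArc A := hsolgamma
    _ ⊆ gammaArc (sSup {B | B ≤ farc B}) := fun s hs i => hAle i (hs i)
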